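/- Let (G1, G2) be genomes on extremity set V and (G1', G2') be genomes on a disjoint extremity set V', with d = d_SCJ(G1,G2) and d' = d_SCJ(G1',G2'), and let N and N' be the numbers of most parsimonious SCJ scenarios from G1 to G2 and from G1' to G2' respectively. Then the number of most parsimonious SCJ scenarios from the disjoint union G1 ⊔ G1' to G2 ⊔ G2' (genomes on V ⊔ V') equals binom(d + d', d) · N · N'. -/

import Mathlib

/-- A genome on an extremity type `V`: a finite set of adjacencies (unordered pairs of
distinct extremities) that are pairwise disjoint (a partial matching). -/
structure Genome (V : Type*) where
  adj : Finset (Sym2 V)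
  not_isDiag : ∀ p ∈ adj, ¬ p.IsDiag
  disj : ∀ p ∈ adj, ∀ q ∈ adj, p ≠ q → ∀ x, x ∈ p → x ∉ q

instance {V : Type*} : Inhabited (Genome V) :=
  ⟨⟨∅, by simp, by simp⟩⟩

variable {V : Type*} [DecidableEq V]

/-- The step from `G` to `G'` is a cut removing the adjacency `p`. -/
def CutsAdj (G G' : Genome V) (p : Sym2 V) : Prop :=
  p ∈ G.adj ∧ G'.adj = G.adj.erase p

/-- The step from `G` to `G'` is a join adding the adjacency `p`
(validity of `G'` forces `p` to be a pair of distinct, currently unmatched extremities). -/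
def JoinsAdj (G G' : Genome V) (p : Sym2 V) : Prop :=
  p ∉ G.adj ∧ G'.adj = insert p G.adj

/-- A single SCJ operation. -/
def SCJStep (G G' : Genome V) : Prop :=
  ∃ p, CutsAdj G G' p ∨ JoinsAdj G G' p

/-- An SCJ scenario from `G1` to `G2`: a finite sequence of genomes starting at `G1`,
ending at `G2`, consecutive ones differing by a single SCJ operation.  A scenario
represented by a list `L` has `L.length - 1` operations. -/
def IsScenario (G1 G2 : Genome V) (L : List (Genome V)) : Prop :=
  L.head? = some G1 ∧ L.getLast? = some G2 ∧ L.Chain' SCJStep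

/-- The SCJ distance: the minimum number of operations in a scenario from `G1` to `G2`. -/
noncomputable def dSCJ (G1 G2 : Genome V) : ℕ :=
  sInf {n | ∃ L, IsScenario G1 G2 L ∧ L.length = n + 1}

/-- A most parsimonious SCJ scenario. -/
def IsMPS (G1 G2 : Genome V) (L : List (Genome V)) : Prop :=
  IsScenario G1 G2 L ∧ L.length = dSCJ G1 G2 + 1

/-- The number of most parsimonious SCJ scenarios from `G1` to `G2`. -/
noncomputable def NumMPS (G1 G2 : Genome V) : ℕ :=
  {L | IsMPS G1 G2 L}.ncard

/-- The `i`-th step of the scenario `L` (steps indexed from `0`) cuts adjacency `p`. -/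
def StepCut (L : List (Genome V)) (i : ℕ) (p : Sym2 V) : Prop :=
  i + 1 < L.length ∧ CutsAdj (L.getD i default) (L.getD (i + 1) default) p

/-- The `i`-th step of the scenario `L` (steps indexed from `0`) joins adjacency `p`. -/
def StepJoin (L : List (Genome V)) (i : ℕ) (p : Sym2 V) : Prop :=
  i + 1 < L.length ∧ JoinsAdj (L.getD i default) (L.getD (i + 1) default) p

/-- `c` is an alternating (up-down) permutation:
`c 0 < c 1 > c 2 < c 3 > …` (i.e. in 1-based notation `c₁ < c₂ > c₃ < …`). -/
def IsAltPerm {n : ℕ} (c : Equiv.Perm (Fin n)) : Prop :=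
  ∀ i : ℕ, ∀ h : i + 1 < n,
    if i % 2 = 0 then c ⟨i, by omega⟩ < c ⟨i + 1, h⟩
    else c ⟨i + 1, h⟩ < c ⟨i, by omega⟩

/-- `A n`, the number of alternating permutations of size `n` (with `A 0 = 1`). -/
noncomputable def altPermCount (n : ℕ) : ℕ :=
  Nat.card {c : Equiv.Perm (Fin n) // IsAltPerm c}

set_option linter.unusedSectionVars false
section Part1
variable {V : Type*} [DecidableEq V]

def Matching (s : Finset (Sym2 V)) : Prop :=
  (∀ p ∈ s, ¬ p.IsDiag) ∧ ∀ p ∈ s, ∀ q ∈ s, p ≠ q → ∀ x, x ∈ p → x ∉ q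

lemma Genome.matching (G : Genome V) : Matching G.adj := ⟨G.not_isDiag, G.disj⟩

lemma Matching.mono {s t : Finset (Sym2 V)} (h : Matching t) (hst : s ⊆ t) : Matching s :=
  ⟨fun p hp => h.1 p (hst hp), fun p hp q hq hpq x hx => h.2 p (hst hp) q (hst hq) hpq x hx⟩

lemma Genome.ext' {G G' : Genome V} (h : G.adj = G'.adj) : G = G' := by
  cases G; cases G'; simpa using h

open Classical in
noncomputable def ofFinset (s : Finset (Sym2 V)) : Genome V :=
  if h : Matching s then ⟨s, h.1, h.2⟩ else default

lemma ofFinset_adj {s : Finset (Sym2 V)} (h : Matching s) : (ofFinset s).adj = s := by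
  simp [ofFinset, h]

lemma ofFinset_self (G : Genome V) : ofFinset G.adj = G :=
  Genome.ext' (ofFinset_adj G.matching)

lemma scjStep_iff {G G' : Genome V} :
    SCJStep G G' ↔ ∃ p, G'.adj = symmDiff G.adj {p} := by
  constructor
  · rintro ⟨p, ⟨hp, h⟩ | ⟨hp, h⟩⟩ <;> refine ⟨p, ?_⟩ <;> rw [h] <;> ext q <;>
      simp [Finset.mem_symmDiff] <;> by_cases hq : q = p <;> simp [hq, hp] <;> tauto
  · rintro ⟨p, h⟩
    by_cases hp : p ∈ G.adj
    · refine ⟨p, Or.inl ⟨hp, ?_⟩⟩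
      rw [h]; ext q; simp [Finset.mem_symmDiff]
      by_cases hq : q = p <;> simp [hq, hp] <;> tauto
    · refine ⟨p, Or.inr ⟨hp, ?_⟩⟩
      rw [h]; ext q; simp [Finset.mem_symmDiff]
      by_cases hq : q = p <;> simp [hq, hp] <;> tauto

lemma card_symmDiff_single_le {s : Finset (Sym2 V)} {p : Sym2 V} (t : Finset (Sym2 V)) :
    (symmDiff (symmDiff s {p}) t).card + 1 ≥ (symmDiff s t).card := by
  have h1 : symmDiff s t = symmDiff (symmDiff (symmDiff s {p}) t) {p} := by
    rw [symmDiff_right_comm]; simp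
  rw [h1]
  have : symmDiff (symmDiff (symmDiff s {p}) t) {p} ⊆ insert p (symmDiff (symmDiff s {p}) t) := by
    intro q hq
    rw [Finset.mem_symmDiff] at hq
    simp at hq ⊢
    tauto
  calc (symmDiff (symmDiff (symmDiff s {p}) t) {p}).card
      ≤ (insert p (symmDiff (symmDiff s {p}) t)).card := Finset.card_le_card this
    _ ≤ (symmDiff (symmDiff s {p}) t).card + 1 := Finset.card_insert_le _ _

/-- Lower bound: any scenario has length ≥ symmDiff card + 1. -/
lemma scenario_length_ge {L : List (Genome V)} :
    ∀ {G1 G2 : Genome V}, IsScenario G1 G2 L → (symmDiff G1.adj G2.adj).card + 1 ≤ L.length := by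
  induction L with
  | nil => intro G1 G2 h; simp [IsScenario] at h
  | cons G L ih =>
    intro G1 G2 h
    obtain ⟨h1, h2, h3⟩ := h
    simp at h1; subst h1
    match L, h2, h3 with
    | [], h2, h3 =>
      simp [List.getLast?] at h2
      subst h2; simp
    | G' :: L', h2, h3 =>
      simp only [List.Chain', List.isChain_cons_cons] at h3
      have hstep := h3.1
      rw [scjStep_iff] at hstep
      obtain ⟨p, hp⟩ := hstep
      have htail : IsScenario G' G2 (G' :: L') := by
        refine ⟨rfl, ?_, h3.2⟩
        rwa [List.getLast?_cons_cons] at h2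
      have := ih htail
      have hcard : (symmDiff G.adj G2.adj).card ≤ (symmDiff G'.adj G2.adj).card + 1 := by
        have := card_symmDiff_single_le (s := G.adj) (p := p) G2.adj
        rw [← hp] at this; omega
      simp at this ⊢
      omega

end Part1
section Part2
set_option linter.unusedSectionVars false
variable {V : Type*} [DecidableEq V]

lemma symmDiff_single_of_mem {s : Finset (Sym2 V)} {p : Sym2 V} (hp : p ∈ s) :
    symmDiff s {p} = s.erase p := by
  ext q; simp [Finset.mem_symmDiff]
  by_cases hq : q = p <;> simp [hq, hp] <;> tauto

lemma symmDiff_single_of_not_mem {s : Finset (Sym2 V)} {p : Sym2 V} (hp : p ∉ s) :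
    symmDiff s {p} = insert p s := by
  ext q; simp [Finset.mem_symmDiff]
  by_cases hq : q = p <;> simp [hq, hp] <;> tauto

lemma scjStep_of_matching {G : Genome V} {p : Sym2 V} (h : Matching (symmDiff G.adj {p})) :
    SCJStep G (ofFinset (symmDiff G.adj {p})) := by
  rw [scjStep_iff]
  exact ⟨p, ofFinset_adj h⟩

/-- Existence of a scenario of length card+1, all of whose intermediate
adjacency sets stay within `G1.adj ∪ G2.adj`. -/
lemma scenario_exists (G1 G2 : Genome V) :
    ∃ L, IsScenario G1 G2 L ∧ L.length = (symmDiff G1.adj G2.adj).card + 1 := by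
  generalize hd : (symmDiff G1.adj G2.adj).card = d
  induction d generalizing G1 with
  | zero =>
    have : symmDiff G1.adj G2.adj = ∅ := Finset.card_eq_zero.mp hd
    have : G1 = G2 := by
      apply Genome.ext'
      have := symmDiff_eq_bot.mp (by exact this)
      exact this
    subst this
    exact ⟨[G1], ⟨rfl, rfl, List.isChain_singleton _⟩, rfl⟩
  | succ n ih =>
    have hne : (symmDiff G1.adj G2.adj).Nonempty := by
      rw [← Finset.card_pos, hd]; omega
    -- pick an element to toggle; prefer a cut if possible
    by_cases hcut : (G1.adj \ G2.adj).Nonempty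
    · obtain ⟨p, hp⟩ := hcut
      simp at hp
      have hmem : p ∈ G1.adj := hp.1
      have hm : Matching (symmDiff G1.adj {p}) := by
        rw [symmDiff_single_of_mem hmem]
        exact G1.matching.mono (Finset.erase_subset _ _)
      set G1' := ofFinset (symmDiff G1.adj {p}) with hG1'
      have hadj : G1'.adj = G1.adj.erase p := by
        rw [hG1', ofFinset_adj hm, symmDiff_single_of_mem hmem]
      have hcard : (symmDiff G1'.adj G2.adj).card = n := by
        have : symmDiff G1'.adj G2.adj = (symmDiff G1.adj G2.adj).erase p := by
          ext q
          simp [hadj, Finset.mem_symmDiff, Finset.mem_erase]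
          by_cases hq : q = p <;> simp [hq, hmem, hp.2] <;> tauto
        rw [this, Finset.card_erase_of_mem (by simp [Finset.mem_symmDiff, hmem, hp.2]), hd]
        omega
      obtain ⟨L, hL, hlen⟩ := ih G1' hcard
      refine ⟨G1 :: L, ⟨rfl, ?_, ?_⟩, by simp only [List.length_cons, hlen, hd]⟩
      · rcases L with _ | ⟨G, L'⟩
        · simp [IsScenario] at hL
        · rw [List.getLast?_cons_cons]; exact hL.2.1
      · rcases L with _ | ⟨G, L'⟩
        · simp [IsScenario] at hL
        · simp only [List.Chain', List.isChain_cons_cons]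
          have hG : G = G1' := by have := hL.1; simpa using this
          exact ⟨hG ▸ scjStep_of_matching hm, hL.2.2⟩
    · -- no cuts available: G1.adj ⊆ G2.adj, do a join
      have hsub : G1.adj ⊆ G2.adj := by
        intro q hq
        by_contra hq2
        exact hcut ⟨q, Finset.mem_sdiff.mpr ⟨hq, hq2⟩⟩
      obtain ⟨p, hp⟩ := hne
      rw [Finset.mem_symmDiff] at hp
      have hp' : p ∈ G2.adj ∧ p ∉ G1.adj := by tauto
      have hm : Matching (symmDiff G1.adj {p}) := by
        rw [symmDiff_single_of_not_mem hp'.2]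
        refine G2.matching.mono ?_
        intro q hq
        simp at hq
        rcases hq with rfl | hq
        · exact hp'.1
        · exact hsub hq
      set G1' := ofFinset (symmDiff G1.adj {p}) with hG1'
      have hadj : G1'.adj = insert p G1.adj := by
        rw [hG1', ofFinset_adj hm, symmDiff_single_of_not_mem hp'.2]
      have hcard : (symmDiff G1'.adj G2.adj).card = n := by
        have : symmDiff G1'.adj G2.adj = (symmDiff G1.adj G2.adj).erase p := by
          ext q
          simp [hadj, Finset.mem_symmDiff, Finset.mem_erase]
          by_cases hq : q = p <;> simp [hq, hp'.1, hp'.2] <;> tauto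
        rw [this, Finset.card_erase_of_mem (by simp [Finset.mem_symmDiff, hp'.1, hp'.2]), hd]
        omega
      obtain ⟨L, hL, hlen⟩ := ih G1' hcard
      refine ⟨G1 :: L, ⟨rfl, ?_, ?_⟩, by simp only [List.length_cons, hlen, hd]⟩
      · rcases L with _ | ⟨G, L'⟩
        · simp [IsScenario] at hL
        · rw [List.getLast?_cons_cons]; exact hL.2.1
      · rcases L with _ | ⟨G, L'⟩
        · simp [IsScenario] at hL
        · simp only [List.Chain', List.isChain_cons_cons]
          have hG : G = G1' := by have := hL.1; simpa using this
          exact ⟨hG ▸ scjStep_of_matching hm, hL.2.2⟩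

lemma dSCJ_eq (G1 G2 : Genome V) : dSCJ G1 G2 = (symmDiff G1.adj G2.adj).card := by
  apply le_antisymm
  · apply Nat.sInf_le
    obtain ⟨L, hL, hlen⟩ := scenario_exists G1 G2
    exact ⟨L, hL, hlen⟩
  · obtain ⟨L, hL, hlen⟩ := scenario_exists G1 G2
    refine le_csInf ⟨_, L, hL, hlen⟩ ?_
    rintro n ⟨L', hL', hlen'⟩
    have := scenario_length_ge hL'
    omega

lemma isMPS_iff {G1 G2 : Genome V} {L : List (Genome V)} :
    IsMPS G1 G2 L ↔ IsScenario G1 G2 L ∧ L.length = (symmDiff G1.adj G2.adj).card + 1 := by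
  rw [IsMPS, dSCJ_eq]

end Part2
section Part3
set_option linter.unusedSectionVars false
variable {V : Type*} [DecidableEq V]

@[simp] lemma symmDiff_empty (s : Finset (Sym2 V)) : symmDiff s ∅ = s := by
  rw [← Finset.bot_eq_empty, symmDiff_bot]

def Valid (s t : Finset (Sym2 V)) (l : List (Sym2 V)) : Prop :=
  l.Nodup ∧ l.toFinset = symmDiff s t ∧ ∀ n, Matching (symmDiff s (l.take n).toFinset)

noncomputable def scen (G : Genome V) : List (Sym2 V) → List (Genome V)
  | [] => [G]
  | p :: l => G :: scen (ofFinset (symmDiff G.adj {p})) l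

@[simp] lemma scen_nil (G : Genome V) : scen G [] = [G] := rfl
@[simp] lemma scen_cons (G : Genome V) (p : Sym2 V) (l : List (Sym2 V)) :
    scen G (p :: l) = G :: scen (ofFinset (symmDiff G.adj {p})) l := rfl

lemma scen_length (G : Genome V) (l : List (Sym2 V)) : (scen G l).length = l.length + 1 := by
  induction l generalizing G with
  | nil => rfl
  | cons p l ih => simp [ih]

lemma scen_head (G : Genome V) (l : List (Sym2 V)) : (scen G l).head? = some G := by
  cases l <;> rfl

lemma valid_cons {s t : Finset (Sym2 V)} {p : Sym2 V} {l : List (Sym2 V)}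
    (h : Valid s t (p :: l)) :
    p ∈ symmDiff s t ∧ p ∉ l ∧ Matching (symmDiff s {p}) ∧ Valid (symmDiff s {p}) t l := by
  obtain ⟨hnd, htf, hm⟩ := h
  have hpl : p ∉ l := (List.nodup_cons.mp hnd).1
  have hpst : p ∈ symmDiff s t := by rw [← htf]; simp
  have hmp : Matching (symmDiff s {p}) := by
    have := hm 1
    simpa using this
  refine ⟨hpst, hpl, hmp, (List.nodup_cons.mp hnd).2, ?_, ?_⟩
  · have : (l.toFinset : Finset (Sym2 V)) = (symmDiff s t).erase p := by
      have h1 : insert p l.toFinset = symmDiff s t := by simpa using htf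
      rw [← h1, Finset.erase_insert (by simpa using hpl)]
    rw [this, ← symmDiff_single_of_mem hpst, symmDiff_right_comm]
  · intro n
    have := hm (n + 1)
    have htake : ((p :: l).take (n + 1)).toFinset = insert p (l.take n).toFinset := by simp
    rw [htake] at this
    have hpn : p ∉ (l.take n).toFinset := by
      simp only [List.mem_toFinset]
      exact fun hc => hpl (List.mem_of_mem_take hc)
    rw [symmDiff_assoc, symmDiff_comm ({p} : Finset (Sym2 V)) _, symmDiff_single_of_not_mem hpn]
    exact this

lemma valid_cons' {s t : Finset (Sym2 V)} {p : Sym2 V} {l : List (Sym2 V)}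
    (hpst : p ∈ symmDiff s t) (hms : Matching s) (h : Valid (symmDiff s {p}) t l) :
    Valid s t (p :: l) := by
  obtain ⟨hnd, htf, hm⟩ := h
  have htf' : l.toFinset = (symmDiff s t).erase p := by
    rw [htf, ← symmDiff_single_of_mem hpst, symmDiff_right_comm]
  have hpl : p ∉ l := by
    intro hc
    have : p ∈ (symmDiff s t).erase p := htf' ▸ List.mem_toFinset.mpr hc
    simp at this
  refine ⟨List.nodup_cons.mpr ⟨hpl, hnd⟩, ?_, ?_⟩
  · simp [htf', Finset.insert_erase hpst]
  · intro n
    cases n with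
    | zero => simpa using hms
    | succ n =>
      have := hm n
      have hpn : p ∉ (l.take n).toFinset := by
        simp only [List.mem_toFinset]
        exact fun hc => hpl (List.mem_of_mem_take hc)
      have htake : ((p :: l).take (n + 1)).toFinset = insert p (l.take n).toFinset := by simp
      rw [htake, ← symmDiff_single_of_not_mem hpn, ← symmDiff_assoc, symmDiff_right_comm]
      exact this

lemma scenario_cons {G1 Gm G2 : Genome V} {M : List (Genome V)}
    (h : IsScenario Gm G2 M) (hstep : SCJStep G1 Gm) : IsScenario G1 G2 (G1 :: M) := by
  obtain ⟨h1, h2, h3⟩ := h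
  rcases M with _ | ⟨G, M'⟩
  · simp at h1
  · simp at h1; subst h1
    exact ⟨rfl, by rwa [List.getLast?_cons_cons], List.isChain_cons_cons.mpr ⟨hstep, h3⟩⟩

lemma mps_scen {G1 G2 : Genome V} {l : List (Sym2 V)} (h : Valid G1.adj G2.adj l) :
    IsMPS G1 G2 (scen G1 l) := by
  rw [isMPS_iff]
  constructor
  · induction l generalizing G1 with
    | nil =>
      have : G1 = G2 := by
        apply Genome.ext'
        have := h.2.1
        simp at this
        exact symmDiff_eq_bot.mp this.symm
      subst this
      exact ⟨rfl, rfl, List.isChain_singleton _⟩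
    | cons p l ih =>
      obtain ⟨hpst, hpl, hmp, hv⟩ := valid_cons h
      have hadj : (ofFinset (symmDiff G1.adj {p})).adj = symmDiff G1.adj {p} := ofFinset_adj hmp
      have hv' : Valid (ofFinset (symmDiff G1.adj {p})).adj G2.adj l := by rw [hadj]; exact hv
      have := ih hv'
      rw [scen_cons]
      exact scenario_cons this (scjStep_of_matching hmp)
  · rw [scen_length, ← h.2.1, List.toFinset_card_of_nodup h.1]

lemma scen_inj {G1 : Genome V} {t : Finset (Sym2 V)} {l l' : List (Sym2 V)}
    (h : Valid G1.adj t l) (h' : Valid G1.adj t l') (heq : scen G1 l = scen G1 l') : l = l' := by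
  induction l generalizing G1 l' with
  | nil =>
    rcases l' with _ | ⟨q, l'⟩
    · rfl
    · exfalso; have := congrArg List.length heq; simp [scen_length] at this
  | cons p l ih =>
    rcases l' with _ | ⟨q, l'⟩
    · exfalso; have := congrArg List.length heq; simp [scen_length] at this
    · simp only [scen_cons, List.cons.injEq] at heq
      obtain ⟨hp1, hpl, hmp, hv⟩ := valid_cons h
      obtain ⟨hq1, hql, hmq, hv'⟩ := valid_cons h'
      have hGG : ofFinset (symmDiff G1.adj {p}) = ofFinset (symmDiff G1.adj {q}) := by
        have := heq.2
        have h1 := scen_head (ofFinset (symmDiff G1.adj {p})) l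
        have h2 := scen_head (ofFinset (symmDiff G1.adj {q})) l'
        rw [this] at h1
        rw [h1] at h2
        exact Option.some_injective _ h2
      have hpq : p = q := by
        have : symmDiff G1.adj {p} = symmDiff G1.adj {q} := by
          have := congrArg Genome.adj hGG
          rwa [ofFinset_adj hmp, ofFinset_adj hmq] at this
        have := symmDiff_right_injective G1.adj this
        exact Finset.singleton_injective this
      subst hpq
      congr 1
      refine ih (G1 := ofFinset (symmDiff G1.adj {p})) ?_ ?_ heq.2
      · rw [ofFinset_adj hmp]; exact hv
      · rw [ofFinset_adj hmp]; exact hv'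

lemma scen_surj {G1 G2 : Genome V} {L : List (Genome V)}
    (h : IsScenario G1 G2 L) (hlen : L.length = (symmDiff G1.adj G2.adj).card + 1) :
    ∃ l, Valid G1.adj G2.adj l ∧ L = scen G1 l := by
  induction L generalizing G1 with
  | nil => simp [IsScenario] at h
  | cons G L ih =>
    obtain ⟨h1, h2, h3⟩ := h
    simp at h1; subst h1
    rcases L with _ | ⟨G', rest⟩
    · simp [List.getLast?] at h2
      subst h2
      refine ⟨[], ⟨List.nodup_nil, by simp, fun n => by simpa using G.matching⟩, rfl⟩
    · simp only [List.Chain', List.isChain_cons_cons] at h3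
      obtain ⟨p, hp⟩ := scjStep_iff.mp h3.1
      have htail : IsScenario G' G2 (G' :: rest) :=
        ⟨rfl, by rwa [List.getLast?_cons_cons] at h2, h3.2⟩
      have hlow := scenario_length_ge htail
      have hup := card_symmDiff_single_le (s := G.adj) (p := p) G2.adj
      rw [← hp] at hup
      simp at hlen hlow
      have hcard : (symmDiff G'.adj G2.adj).card = (symmDiff G.adj G2.adj).card - 1 := by omega
      have hpos : 1 ≤ (symmDiff G.adj G2.adj).card := by omega
      have hpmem : p ∈ symmDiff G.adj G2.adj := by
        by_contra hpc
        have : symmDiff G'.adj G2.adj = insert p (symmDiff G.adj G2.adj) := by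
          rw [hp, symmDiff_right_comm, symmDiff_single_of_not_mem hpc]
        rw [this, Finset.card_insert_of_notMem hpc] at hcard
        omega
      obtain ⟨l', hv', hL'⟩ := ih htail (by simp; omega)
      have hmp : Matching (symmDiff G.adj {p}) := hp ▸ G'.matching
      have hG' : ofFinset (symmDiff G.adj {p}) = G' := Genome.ext' (by rw [ofFinset_adj hmp, hp])
      refine ⟨p :: l', valid_cons' hpmem G.matching (by rw [← hp]; exact hv'), ?_⟩
      rw [scen_cons, hG', ← hL']

lemma numMPS_eq_card_valid (G1 G2 : Genome V) :
    NumMPS G1 G2 = Nat.card {l : List (Sym2 V) // Valid G1.adj G2.adj l} := by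
  rw [NumMPS, ← Nat.card_coe_set_eq]
  apply Nat.card_congr
  apply Equiv.symm
  refine Equiv.ofBijective (fun l => ⟨scen G1 l.1, mps_scen l.2⟩) ⟨?_, ?_⟩
  · rintro ⟨l, hl⟩ ⟨l', hl'⟩ h
    simp only [Subtype.mk.injEq] at h ⊢
    exact scen_inj hl hl' h
  · rintro ⟨L, hL⟩
    rw [Set.mem_setOf_eq, isMPS_iff] at hL
    obtain ⟨l, hv, hLl⟩ := scen_surj hL.1 hL.2
    exact ⟨⟨l, hv⟩, by simp [← hLl]⟩
end Part3
section Part5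

lemma finite_boolList (n : ℕ) (P : List Bool → Prop) :
    Finite {bs : List Bool // bs.length = n ∧ P bs} := by
  apply Finite.of_injective (fun x => (fun i : Fin n => x.1.getD i false))
  rintro ⟨bs, hbs, _⟩ ⟨cs, hcs, _⟩ h
  simp only [Subtype.mk.injEq]
  apply List.ext_getElem (by omega)
  intro i h1 h2
  have := congrFun h ⟨i, by omega⟩
  simpa [List.getD_eq_getElem?_getD, List.getElem?_eq_getElem, h1, h2] using this

lemma card_boolList (n k : ℕ) :
    Nat.card {bs : List Bool // bs.length = n ∧ bs.count true = k} = n.choose k := by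
  induction n generalizing k with
  | zero =>
    rcases k with _ | k
    · haveI : Unique {bs : List Bool // bs.length = 0 ∧ bs.count true = 0} := by
        refine ⟨⟨⟨[], by simp⟩⟩, ?_⟩
        rintro ⟨bs, h1, h2⟩
        have : bs = [] := List.length_eq_zero_iff.mp h1
        subst this; rfl
      rw [Nat.card_unique]; rfl
    · haveI : IsEmpty {bs : List Bool // bs.length = 0 ∧ bs.count true = k + 1} := by
        refine ⟨?_⟩
        rintro ⟨bs, h1, h2⟩
        have : bs = [] := List.length_eq_zero_iff.mp h1
        subst this; simp at h2
      rw [Nat.card_of_isEmpty]; simp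
  | succ n ih =>
    haveI := finite_boolList n (fun bs => bs.count true = k)
    haveI := finite_boolList n (fun bs => bs.count true + 1 = k)
    have e : {bs : List Bool // bs.length = n + 1 ∧ bs.count true = k} ≃
        {bs : List Bool // bs.length = n ∧ bs.count true = k} ⊕
        {bs : List Bool // bs.length = n ∧ bs.count true + 1 = k} := by
      apply Equiv.symm
      refine Equiv.ofBijective (fun x => Sum.elim
        (fun y : {bs : List Bool // bs.length = n ∧ bs.count true = k} =>
          (⟨false :: y.1, by simp [y.2.1, y.2.2]⟩ : {bs : List Bool // bs.length = n + 1 ∧ bs.count true = k}))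
        (fun y : {bs : List Bool // bs.length = n ∧ bs.count true + 1 = k} =>
          ⟨true :: y.1, by simp [y.2.1]; have := y.2.2; omega⟩) x) ⟨?_, ?_⟩
      · rintro (⟨bs, h⟩ | ⟨bs, h⟩) (⟨cs, h'⟩ | ⟨cs, h'⟩) heq <;>
          simp only [Sum.elim_inl, Sum.elim_inr, Subtype.mk.injEq, List.cons.injEq] at heq <;>
          simp_all
      · rintro ⟨bs, h1, h2⟩
        rcases bs with _ | ⟨b, bs⟩
        · simp at h1
        · cases b
          · exact ⟨Sum.inl ⟨bs, by simpa using h1, by simpa using h2⟩, rfl⟩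
          · refine ⟨Sum.inr ⟨bs, by simpa using h1, ?_⟩, rfl⟩
            simp at h2; omega
    rw [Nat.card_congr e, Nat.card_sum, ih]
    rcases k with _ | k
    · haveI : IsEmpty {bs : List Bool // bs.length = n ∧ bs.count true + 1 = 0} := by
        refine ⟨?_⟩; rintro ⟨bs, h1, h2⟩; omega
      simp [Nat.card_of_isEmpty]
    · have e2 : {bs : List Bool // bs.length = n ∧ bs.count true + 1 = k + 1} ≃
          {bs : List Bool // bs.length = n ∧ bs.count true = k} :=
        Equiv.subtypeEquivRight (fun bs => by constructor <;> rintro ⟨h1, h2⟩ <;> exact ⟨h1, by omega⟩)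
      rw [Nat.card_congr e2, ih, Nat.choose_succ_succ']
      ring

end Part5
section Part4a
variable {α β γ : Type*}

def mergeL (f : α → γ) (g : β → γ) : List Bool → List α → List β → List γ
  | [], _, _ => []
  | true :: bs, a :: as, l2 => f a :: mergeL f g bs as l2
  | true :: _, [], _ => []
  | false :: bs, l1, b :: l2 => g b :: mergeL f g bs l1 l2
  | false :: _, _, [] => []

variable {f : α → γ} {g : β → γ} {pl : γ → Option α} {pr : γ → Option β}

lemma mem_mergeL {bs : List Bool} {l1 : List α} {l2 : List β} {q : γ}
    (h : q ∈ mergeL f g bs l1 l2) : (∃ a ∈ l1, q = f a) ∨ (∃ b ∈ l2, q = g b) := by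
  induction bs, l1, l2 using mergeL.induct with
  | case1 l1 l2 => simp [mergeL] at h
  | case2 bs a as l2 ih =>
    rw [mergeL] at h
    rcases List.mem_cons.mp h with rfl | h
    · exact Or.inl ⟨a, by simp⟩
    · rcases ih h with ⟨a', ha, rfl⟩ | hb
      · exact Or.inl ⟨a', by simp [ha]⟩
      · exact Or.inr hb
  | case3 bs l2 => simp [mergeL] at h
  | case4 bs l1 b l2 ih =>
    rw [mergeL] at h
    rcases List.mem_cons.mp h with rfl | h
    · exact Or.inr ⟨b, by simp⟩
    · rcases ih h with ha | ⟨b', hb, rfl⟩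
      · exact Or.inl ha
      · exact Or.inr ⟨b', by simp [hb]⟩
  | case5 bs l1 => simp [mergeL] at h

section
variable (hplf : ∀ a, pl (f a) = some a) (hpl_some : ∀ q a, pl q = some a → q = f a)
variable (hprg : ∀ b, pr (g b) = some b) (hpr_some : ∀ q b, pr q = some b → q = g b)
variable (hplg : ∀ b, pl (g b) = none) (hprf : ∀ a, pr (f a) = none)

include hplf hpl_some in
lemma f_inj : Function.Injective f := by
  intro a a' h
  have := hplf a
  rw [h, hplf a'] at this
  exact (Option.some_injective _ this).symm

include hplf hplg in
lemma filterMap_pl_mergeL : ∀ {bs : List Bool} {l1 : List α} {l2 : List β},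
    bs.count true = l1.length → bs.length = l1.length + l2.length →
    (mergeL f g bs l1 l2).filterMap pl = l1 := by
  intro bs l1 l2 hc hl
  induction bs, l1, l2 using mergeL.induct with
  | case1 l1 l2 =>
    simp at hl
    have h1 : l1 = [] := List.length_eq_zero_iff.mp (by omega)
    simp [mergeL, h1]
  | case2 bs a as l2 ih =>
    rw [mergeL, List.filterMap_cons, hplf]
    simp at hc hl
    rw [ih (by omega) (by omega)]
  | case3 bs l2 => simp at hc
  | case4 bs l1 b l2 ih =>
    rw [mergeL, List.filterMap_cons, hplg]
    simp at hc hl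
    exact ih (by omega) (by omega)
  | case5 bs l1 =>
    simp at hc hl
    have := List.count_le_length (l := bs) (a := true)
    omega

include hprg hprf in
lemma filterMap_pr_mergeL : ∀ {bs : List Bool} {l1 : List α} {l2 : List β},
    bs.count true = l1.length → bs.length = l1.length + l2.length →
    (mergeL f g bs l1 l2).filterMap pr = l2 := by
  intro bs l1 l2 hc hl
  induction bs, l1, l2 using mergeL.induct with
  | case1 l1 l2 =>
    simp at hl
    have h2 : l2 = [] := List.length_eq_zero_iff.mp (by omega)
    simp [mergeL, h2]
  | case2 bs a as l2 ih =>
    rw [mergeL, List.filterMap_cons, hprf]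
    simp at hc hl
    exact ih (by omega) (by omega)
  | case3 bs l2 => simp at hc
  | case4 bs l1 b l2 ih =>
    rw [mergeL, List.filterMap_cons, hprg]
    simp at hc hl
    rw [ih (by omega) (by omega)]
  | case5 bs l1 =>
    simp at hc hl
    have := List.count_le_length (l := bs) (a := true)
    omega

include hplf hplg in
lemma map_isSome_mergeL : ∀ {bs : List Bool} {l1 : List α} {l2 : List β},
    bs.count true = l1.length → bs.length = l1.length + l2.length →
    (mergeL f g bs l1 l2).map (fun q => (pl q).isSome) = bs := by
  intro bs l1 l2 hc hl
  induction bs, l1, l2 using mergeL.induct with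
  | case1 l1 l2 => simp [mergeL]
  | case2 bs a as l2 ih =>
    rw [mergeL, List.map_cons, hplf]
    simp only [Option.isSome_some]
    simp at hc hl
    rw [ih (by omega) (by omega)]
  | case3 bs l2 => simp at hc
  | case4 bs l1 b l2 ih =>
    rw [mergeL, List.map_cons, hplg]
    simp only [Option.isSome_none]
    simp at hc hl
    rw [ih (by omega) (by omega)]
  | case5 bs l1 =>
    simp at hc hl
    have := List.count_le_length (l := bs) (a := true)
    omega

include hplf hplg hprf hprg in
lemma mergeL_split {m : List γ} (hm : ∀ q ∈ m, (∃ a, q = f a) ∨ (∃ b, q = g b)) :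
    mergeL f g (m.map (fun q => (pl q).isSome)) (m.filterMap pl) (m.filterMap pr) = m := by
  induction m with
  | nil => simp [mergeL]
  | cons q m ih =>
    rcases hm q (by simp) with ⟨a, rfl⟩ | ⟨b, rfl⟩
    · simp only [List.map_cons, List.filterMap_cons, hplf, hprf]
      simp only [Option.isSome_some]
      rw [mergeL, ih (fun q hq => hm q (by simp [hq]))]
    · simp only [List.map_cons, List.filterMap_cons, hprg, hplg]
      simp only [Option.isSome_none]
      rw [mergeL, ih (fun q hq => hm q (by simp [hq]))]

include hplf hpl_some hprg hpr_some hplg in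
lemma nodup_mergeL : ∀ {bs : List Bool} {l1 : List α} {l2 : List β},
    l1.Nodup → l2.Nodup → (mergeL f g bs l1 l2).Nodup := by
  intro bs l1 l2 h1 h2
  induction bs, l1, l2 using mergeL.induct with
  | case1 l1 l2 => simp [mergeL]
  | case2 bs a as l2 ih =>
    rw [mergeL, List.nodup_cons]
    refine ⟨?_, ih (List.nodup_cons.mp h1).2 h2⟩
    intro hc
    rcases mem_mergeL hc with ⟨a', ha', heq⟩ | ⟨b, _, heq⟩
    · have : a = a' := by
        have h3 := hplf a
        rw [heq, hplf a'] at h3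
        exact (Option.some_injective _ h3).symm
      exact (List.nodup_cons.mp h1).1 (this ▸ ha')
    · have h3 := hplf a
      rw [heq, hplg b] at h3
      simp at h3
  | case3 bs l2 => simp [mergeL]
  | case4 bs l1 b l2 ih =>
    rw [mergeL, List.nodup_cons]
    refine ⟨?_, ih h1 (List.nodup_cons.mp h2).2⟩
    intro hc
    rcases mem_mergeL hc with ⟨a, _, heq⟩ | ⟨b', hb', heq⟩
    · have h3 := hplg b
      rw [heq, hplf a] at h3
      simp at h3
    · have : b = b' := by
        have h3 := hprg b
        rw [heq, hprg b'] at h3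
        exact (Option.some_injective _ h3).symm
      exact (List.nodup_cons.mp h2).1 (this ▸ hb')
  | case5 bs l1 => simp [mergeL]

lemma count_mask {m : List γ} :
    (m.map (fun q => (pl q).isSome)).count true = (m.filterMap pl).length := by
  induction m with
  | nil => rfl
  | cons q m ih =>
    rw [List.map_cons, List.filterMap_cons]
    cases h : pl q <;> simp [h, ih]

lemma takePrefix_filterMap (pl : γ → Option α) (m : List γ) (j : ℕ) :
    ∃ n, (m.filterMap pl).take j = (m.take n).filterMap pl := by
  induction m generalizing j with
  | nil => exact ⟨0, by simp⟩
  | cons q m ih =>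
    rcases j with _ | j
    · exact ⟨0, by simp⟩
    · cases h : pl q with
      | none =>
        obtain ⟨n, hn⟩ := ih (j + 1)
        exact ⟨n + 1, by simp [List.filterMap_cons, h, hn]⟩
      | some a =>
        obtain ⟨n, hn⟩ := ih j
        exact ⟨n + 1, by simp [List.filterMap_cons, h, hn]⟩

lemma filterMap_take_prefix (pl : γ → Option α) (m : List γ) (n : ℕ) :
    ∃ j, (m.take n).filterMap pl = (m.filterMap pl).take j := by
  have hpre : (m.take n).filterMap pl <+: m.filterMap pl :=
    (List.take_prefix n m).filterMap pl
  exact ⟨_, List.prefix_iff_eq_take.mp hpre⟩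

end
end Part4a
section Part4b

lemma symmDiff_union_sep {γ : Type*} [DecidableEq γ] (P : γ → Prop) {X Z Y W : Finset γ}
    (hX : ∀ x ∈ X, P x) (hZ : ∀ x ∈ Z, P x) (hY : ∀ x ∈ Y, ¬P x) (hW : ∀ x ∈ W, ¬P x) :
    symmDiff (X ∪ Y) (Z ∪ W) = symmDiff X Z ∪ symmDiff Y W := by
  ext x
  simp only [Finset.mem_symmDiff, Finset.mem_union]
  by_cases h : P x
  · have h1 : x ∉ Y := fun hc => hY x hc h
    have h2 : x ∉ W := fun hc => hW x hc h
    tauto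
  · have h1 : x ∉ X := fun hc => h (hX x hc)
    have h2 : x ∉ Z := fun hc => h (hZ x hc)
    tauto

variable {V V' : Type*}

def projL : Sym2 (V ⊕ V') → Option (Sym2 V) :=
  Sym2.lift ⟨fun x y => match x, y with
    | Sum.inl a, Sum.inl b => some s(a, b)
    | _, _ => none,
    by rintro (a | a) (b | b) <;> simp [Sym2.eq_swap]⟩

def projR : Sym2 (V ⊕ V') → Option (Sym2 V') :=
  Sym2.lift ⟨fun x y => match x, y with
    | Sum.inr a, Sum.inr b => some s(a, b)
    | _, _ => none,
    by rintro (a | a) (b | b) <;> simp [Sym2.eq_swap]⟩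

@[simp] lemma projL_inl (p : Sym2 V) : projL (Sym2.map (Sum.inl : V → V ⊕ V') p) = some p := by
  induction p using Sym2.ind with
  | _ x y => rfl

@[simp] lemma projL_inr (p : Sym2 V') : projL (Sym2.map (Sum.inr : V' → V ⊕ V') p) = none := by
  induction p using Sym2.ind with
  | _ x y => rfl

@[simp] lemma projR_inr (p : Sym2 V') : projR (Sym2.map (Sum.inr : V' → V ⊕ V') p) = some p := by
  induction p using Sym2.ind with
  | _ x y => rfl

@[simp] lemma projR_inl (p : Sym2 V) : projR (Sym2.map (Sum.inl : V → V ⊕ V') p) = none := by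
  induction p using Sym2.ind with
  | _ x y => rfl

lemma projL_eq_some {q : Sym2 (V ⊕ V')} {p : Sym2 V} (h : projL q = some p) :
    q = Sym2.map Sum.inl p := by
  induction q using Sym2.ind with
  | _ x y =>
    rcases x with a | a <;> rcases y with b | b
    · have hp : p = s(a, b) := by simpa [projL, Sym2.lift_mk] using h.symm
      simp [hp]
    · simp [projL, Sym2.lift_mk] at h
    · simp [projL, Sym2.lift_mk] at h
    · simp [projL, Sym2.lift_mk] at h

lemma projR_eq_some {q : Sym2 (V ⊕ V')} {p : Sym2 V'} (h : projR q = some p) :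
    q = Sym2.map Sum.inr p := by
  induction q using Sym2.ind with
  | _ x y =>
    rcases x with a | a <;> rcases y with b | b
    · simp [projR, Sym2.lift_mk] at h
    · simp [projR, Sym2.lift_mk] at h
    · simp [projR, Sym2.lift_mk] at h
    · have hp : p = s(a, b) := by simpa [projR, Sym2.lift_mk] using h.symm
      simp [hp]

lemma mapInl_injective : Function.Injective (Sym2.map (Sum.inl : V → V ⊕ V')) := by
  intro p q h
  have h1 := projL_inl (V' := V') p
  rw [h, projL_inl] at h1
  exact (Option.some_injective _ h1).symm

lemma mapInr_injective : Function.Injective (Sym2.map (Sum.inr : V' → V ⊕ V')) := by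
  intro p q h
  have h1 := projR_inr (V := V) p
  rw [h, projR_inr] at h1
  exact (Option.some_injective _ h1).symm

lemma mapInl_ne_mapInr (p : Sym2 V) (p' : Sym2 V') :
    Sym2.map (Sum.inl : V → V ⊕ V') p ≠ Sym2.map Sum.inr p' := by
  intro h
  have h1 := projL_inl (V' := V') p
  rw [h, projL_inr] at h1
  simp at h1

section withDec
variable [DecidableEq V] [DecidableEq V']

lemma mem_image_inl_iff {a : Finset (Sym2 V)} {p : Sym2 V} :
    Sym2.map (Sum.inl : V → V ⊕ V') p ∈ a.image (Sym2.map Sum.inl) ↔ p ∈ a := by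
  constructor
  · rintro h
    obtain ⟨p', hp', heq⟩ := Finset.mem_image.mp h
    rwa [← mapInl_injective heq]
  · intro h; exact Finset.mem_image_of_mem _ h

lemma mem_image_inr_iff {b : Finset (Sym2 V')} {p : Sym2 V'} :
    Sym2.map (Sum.inr : V' → V ⊕ V') p ∈ b.image (Sym2.map Sum.inr) ↔ p ∈ b := by
  constructor
  · rintro h
    obtain ⟨p', hp', heq⟩ := Finset.mem_image.mp h
    rwa [← mapInr_injective heq]
  · intro h; exact Finset.mem_image_of_mem _ h

lemma adj_symmDiff_decomp (a c : Finset (Sym2 V)) (b d : Finset (Sym2 V')) :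
    symmDiff (a.image (Sym2.map (Sum.inl : V → V ⊕ V')) ∪ b.image (Sym2.map Sum.inr))
      (c.image (Sym2.map Sum.inl) ∪ d.image (Sym2.map Sum.inr)) =
    (symmDiff a c).image (Sym2.map Sum.inl) ∪ (symmDiff b d).image (Sym2.map Sum.inr) := by
  rw [symmDiff_union_sep (fun q => (projL q).isSome)]
  · rw [Finset.image_symmDiff _ _ mapInl_injective, Finset.image_symmDiff _ _ mapInr_injective]
  · rintro x hx
    obtain ⟨p, _, rfl⟩ := Finset.mem_image.mp hx
    simp
  · rintro x hx
    obtain ⟨p, _, rfl⟩ := Finset.mem_image.mp hx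
    simp
  · rintro x hx
    obtain ⟨p, _, rfl⟩ := Finset.mem_image.mp hx
    simp
  · rintro x hx
    obtain ⟨p, _, rfl⟩ := Finset.mem_image.mp hx
    simp

lemma matching_decomp {a : Finset (Sym2 V)} {b : Finset (Sym2 V')} :
    Matching (a.image (Sym2.map (Sum.inl : V → V ⊕ V')) ∪ b.image (Sym2.map Sum.inr)) ↔
      Matching a ∧ Matching b := by
  constructor
  · intro h
    refine ⟨⟨?_, ?_⟩, ?_, ?_⟩
    · intro p hp
      have := h.1 _ (Finset.mem_union_left _ (Finset.mem_image_of_mem _ hp))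
      rwa [Sym2.isDiag_map Sum.inl_injective] at this
    · intro p hp q hq hpq x hxp hxq
      refine h.2 _ (Finset.mem_union_left _ (Finset.mem_image_of_mem _ hp))
        _ (Finset.mem_union_left _ (Finset.mem_image_of_mem _ hq))
        (fun hc => hpq (mapInl_injective hc)) (Sum.inl x)
        (Sym2.mem_map.mpr ⟨x, hxp, rfl⟩) (Sym2.mem_map.mpr ⟨x, hxq, rfl⟩)
    · intro p hp
      have := h.1 _ (Finset.mem_union_right _ (Finset.mem_image_of_mem _ hp))
      rwa [Sym2.isDiag_map Sum.inr_injective] at this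
    · intro p hp q hq hpq x hxp hxq
      refine h.2 _ (Finset.mem_union_right _ (Finset.mem_image_of_mem _ hp))
        _ (Finset.mem_union_right _ (Finset.mem_image_of_mem _ hq))
        (fun hc => hpq (mapInr_injective hc)) (Sum.inr x)
        (Sym2.mem_map.mpr ⟨x, hxp, rfl⟩) (Sym2.mem_map.mpr ⟨x, hxq, rfl⟩)
  · rintro ⟨ha, hb⟩
    constructor
    · intro q hq
      rcases Finset.mem_union.mp hq with h | h <;> obtain ⟨p, hp, rfl⟩ := Finset.mem_image.mp h
      · rw [Sym2.isDiag_map Sum.inl_injective]; exact ha.1 p hp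
      · rw [Sym2.isDiag_map Sum.inr_injective]; exact hb.1 p hp
    · intro q1 hq1 q2 hq2 hne x hx1 hx2
      rcases Finset.mem_union.mp hq1 with h1 | h1 <;> obtain ⟨p1, hp1, rfl⟩ := Finset.mem_image.mp h1 <;>
        rcases Finset.mem_union.mp hq2 with h2 | h2 <;> obtain ⟨p2, hp2, rfl⟩ := Finset.mem_image.mp h2 <;>
        obtain ⟨y1, hy1, rfl⟩ := Sym2.mem_map.mp hx1 <;> obtain ⟨y2, hy2, hy2e⟩ := Sym2.mem_map.mp hx2
      · have : y2 = y1 := Sum.inl_injective hy2e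
        subst this
        exact ha.2 p1 hp1 p2 hp2 (fun hc => hne (by rw [hc])) y2 hy1 hy2
      · simp at hy2e
      · simp at hy2e
      · have : y2 = y1 := Sum.inr_injective hy2e
        subst this
        exact hb.2 p1 hp1 p2 hp2 (fun hc => hne (by rw [hc])) y2 hy1 hy2

lemma mem_toFinset_filterMap_projL {m : List (Sym2 (V ⊕ V'))} {p : Sym2 V} :
    p ∈ (m.filterMap projL).toFinset ↔ Sym2.map Sum.inl p ∈ m := by
  simp only [List.mem_toFinset, List.mem_filterMap]
  constructor
  · rintro ⟨q, hq, hsome⟩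
    rwa [← projL_eq_some hsome]
  · intro h
    exact ⟨_, h, projL_inl p⟩

lemma mem_toFinset_filterMap_projR {m : List (Sym2 (V ⊕ V'))} {p : Sym2 V'} :
    p ∈ (m.filterMap projR).toFinset ↔ Sym2.map Sum.inr p ∈ m := by
  simp only [List.mem_toFinset, List.mem_filterMap]
  constructor
  · rintro ⟨q, hq, hsome⟩
    rwa [← projR_eq_some hsome]
  · intro h
    exact ⟨_, h, projR_inr p⟩

lemma toFinset_decomp {m : List (Sym2 (V ⊕ V'))}
    (hm : ∀ q ∈ m, (∃ p, q = Sym2.map Sum.inl p) ∨ (∃ p, q = Sym2.map Sum.inr p)) :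
    m.toFinset = (m.filterMap projL).toFinset.image (Sym2.map Sum.inl) ∪
      (m.filterMap projR).toFinset.image (Sym2.map Sum.inr) := by
  ext q
  simp only [Finset.mem_union, Finset.mem_image]
  constructor
  · intro hq
    rw [List.mem_toFinset] at hq
    rcases hm q hq with ⟨p, rfl⟩ | ⟨p, rfl⟩
    · exact Or.inl ⟨p, mem_toFinset_filterMap_projL.mpr hq, rfl⟩
    · exact Or.inr ⟨p, mem_toFinset_filterMap_projR.mpr hq, rfl⟩
  · rintro (⟨p, hp, rfl⟩ | ⟨p, hp, rfl⟩)
    · exact List.mem_toFinset.mpr (mem_toFinset_filterMap_projL.mp hp)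
    · exact List.mem_toFinset.mpr (mem_toFinset_filterMap_projR.mp hp)

end withDec
end Part4b
section Part4c
set_option linter.unusedSectionVars false

def prodSubtypeEquiv {A B C : Type*} (P : A → Prop) (Q : B → Prop) (R : C → Prop) :
    {x : A × B × C // P x.1 ∧ Q x.2.1 ∧ R x.2.2} ≃ {a // P a} × {b // Q b} × {c // R c} where
  toFun x := (⟨x.1.1, x.2.1⟩, ⟨x.1.2.1, x.2.2.1⟩, ⟨x.1.2.2, x.2.2.2⟩)
  invFun y := ⟨(y.1.1, y.2.1.1, y.2.2.1), y.1.2, y.2.1.2, y.2.2.2⟩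
  left_inv x := rfl
  right_inv y := rfl

variable {V V' : Type*} [DecidableEq V] [DecidableEq V']
variable {G1 G2 : Genome V} {G1' G2' : Genome V'} {H1 H2 : Genome (V ⊕ V')}

lemma DH (hH1 : H1.adj = G1.adj.image (Sym2.map Sum.inl) ∪ G1'.adj.image (Sym2.map Sum.inr))
    (hH2 : H2.adj = G2.adj.image (Sym2.map Sum.inl) ∪ G2'.adj.image (Sym2.map Sum.inr)) :
    symmDiff H1.adj H2.adj = (symmDiff G1.adj G2.adj).image (Sym2.map Sum.inl) ∪
      (symmDiff G1'.adj G2'.adj).image (Sym2.map Sum.inr) := by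
  rw [hH1, hH2, adj_symmDiff_decomp]

lemma valid_merge
    (hH1 : H1.adj = G1.adj.image (Sym2.map Sum.inl) ∪ G1'.adj.image (Sym2.map Sum.inr))
    (hH2 : H2.adj = G2.adj.image (Sym2.map Sum.inl) ∪ G2'.adj.image (Sym2.map Sum.inr))
    {bs : List Bool} {l1 : List (Sym2 V)} {l2 : List (Sym2 V')}
    (hb1 : bs.count true = l1.length) (hb2 : bs.length = l1.length + l2.length)
    (h1 : Valid G1.adj G2.adj l1) (h2 : Valid G1'.adj G2'.adj l2) :
    Valid H1.adj H2.adj (mergeL (Sym2.map Sum.inl) (Sym2.map Sum.inr) bs l1 l2) := by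
  set m := mergeL (Sym2.map Sum.inl) (Sym2.map Sum.inr) bs l1 l2 with hm
  have hflm : m.filterMap projL = l1 :=
    filterMap_pl_mergeL (fun a => projL_inl a) (fun b => projL_inr b) hb1 hb2
  have hfrm : m.filterMap projR = l2 :=
    filterMap_pr_mergeL (fun b => projR_inr b) (fun a => projR_inl a) hb1 hb2
  have hshape : ∀ q ∈ m, (∃ p, q = Sym2.map Sum.inl p) ∨ (∃ p, q = Sym2.map Sum.inr p) := by
    intro q hq
    rcases mem_mergeL hq with ⟨a, _, rfl⟩ | ⟨b, _, rfl⟩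
    · exact Or.inl ⟨a, rfl⟩
    · exact Or.inr ⟨b, rfl⟩
  refine ⟨?_, ?_, ?_⟩
  · exact nodup_mergeL (fun a => projL_inl a) (fun q a h => projL_eq_some h)
      (fun b => projR_inr b) (fun q b h => projR_eq_some h) (fun b => projL_inr b) h1.1 h2.1
  · rw [toFinset_decomp hshape, hflm, hfrm, h1.2.1, h2.2.1, DH hH1 hH2]
  · intro n
    obtain ⟨j, hj⟩ := filterMap_take_prefix projL m n
    obtain ⟨j', hj'⟩ := filterMap_take_prefix projR m n
    rw [hflm] at hj
    rw [hfrm] at hj'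
    have hshape' : ∀ q ∈ m.take n, (∃ p, q = Sym2.map Sum.inl p) ∨ (∃ p, q = Sym2.map Sum.inr p) :=
      fun q hq => hshape q (List.mem_of_mem_take hq)
    rw [toFinset_decomp hshape', hj, hj', hH1, adj_symmDiff_decomp, matching_decomp]
    exact ⟨h1.2.2 j, h2.2.2 j'⟩

lemma split_shapes
    (hH1 : H1.adj = G1.adj.image (Sym2.map Sum.inl) ∪ G1'.adj.image (Sym2.map Sum.inr))
    (hH2 : H2.adj = G2.adj.image (Sym2.map Sum.inl) ∪ G2'.adj.image (Sym2.map Sum.inr))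
    {m : List (Sym2 (V ⊕ V'))} (hm : Valid H1.adj H2.adj m) :
    ∀ q ∈ m, (∃ p, q = Sym2.map Sum.inl p) ∨ (∃ p, q = Sym2.map Sum.inr p) := by
  intro q hq
  have : q ∈ m.toFinset := List.mem_toFinset.mpr hq
  rw [hm.2.1, DH hH1 hH2] at this
  rcases Finset.mem_union.mp this with h | h <;> obtain ⟨p, _, rfl⟩ := Finset.mem_image.mp h
  · exact Or.inl ⟨p, rfl⟩
  · exact Or.inr ⟨p, rfl⟩

lemma valid_split_left
    (hH1 : H1.adj = G1.adj.image (Sym2.map Sum.inl) ∪ G1'.adj.image (Sym2.map Sum.inr))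
    (hH2 : H2.adj = G2.adj.image (Sym2.map Sum.inl) ∪ G2'.adj.image (Sym2.map Sum.inr))
    {m : List (Sym2 (V ⊕ V'))} (hm : Valid H1.adj H2.adj m) :
    Valid G1.adj G2.adj (m.filterMap projL) := by
  refine ⟨?_, ?_, ?_⟩
  · refine hm.1.filterMap ?_
    intro a a' b hb hb'
    rw [Option.mem_def] at hb hb'
    rw [projL_eq_some hb, projL_eq_some hb']
  · ext p
    rw [mem_toFinset_filterMap_projL, ← List.mem_toFinset, hm.2.1, DH hH1 hH2]
    constructor
    · intro h
      rcases Finset.mem_union.mp h with h | h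
      · exact mem_image_inl_iff.mp h
      · obtain ⟨p', _, heq⟩ := Finset.mem_image.mp h
        exact absurd heq.symm (mapInl_ne_mapInr p p')
    · intro h
      exact Finset.mem_union_left _ (mem_image_inl_iff.mpr h)
  · intro j
    obtain ⟨n, hn⟩ := takePrefix_filterMap projL m j
    obtain ⟨j', hj'⟩ := filterMap_take_prefix projR m n
    have hshape' : ∀ q ∈ m.take n, (∃ p, q = Sym2.map Sum.inl p) ∨ (∃ p, q = Sym2.map Sum.inr p) :=
      fun q hq => split_shapes hH1 hH2 hm q (List.mem_of_mem_take hq)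
    have hmn := hm.2.2 n
    rw [toFinset_decomp hshape', ← hn, hj', hH1, adj_symmDiff_decomp, matching_decomp] at hmn
    exact hmn.1

lemma valid_split_right
    (hH1 : H1.adj = G1.adj.image (Sym2.map Sum.inl) ∪ G1'.adj.image (Sym2.map Sum.inr))
    (hH2 : H2.adj = G2.adj.image (Sym2.map Sum.inl) ∪ G2'.adj.image (Sym2.map Sum.inr))
    {m : List (Sym2 (V ⊕ V'))} (hm : Valid H1.adj H2.adj m) :
    Valid G1'.adj G2'.adj (m.filterMap projR) := by
  refine ⟨?_, ?_, ?_⟩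
  · refine hm.1.filterMap ?_
    intro a a' b hb hb'
    rw [Option.mem_def] at hb hb'
    rw [projR_eq_some hb, projR_eq_some hb']
  · ext p
    rw [mem_toFinset_filterMap_projR, ← List.mem_toFinset, hm.2.1, DH hH1 hH2]
    constructor
    · intro h
      rcases Finset.mem_union.mp h with h | h
      · obtain ⟨p', _, heq⟩ := Finset.mem_image.mp h
        exact absurd heq (mapInl_ne_mapInr p' p)
      · exact mem_image_inr_iff.mp h
    · intro h
      exact Finset.mem_union_right _ (mem_image_inr_iff.mpr h)
  · intro j
    obtain ⟨n, hn⟩ := takePrefix_filterMap projR m j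
    obtain ⟨j', hj'⟩ := filterMap_take_prefix projL m n
    have hshape' : ∀ q ∈ m.take n, (∃ p, q = Sym2.map Sum.inl p) ∨ (∃ p, q = Sym2.map Sum.inr p) :=
      fun q hq => split_shapes hH1 hH2 hm q (List.mem_of_mem_take hq)
    have hmn := hm.2.2 n
    rw [toFinset_decomp hshape', ← hn, hj', hH1, adj_symmDiff_decomp, matching_decomp] at hmn
    exact hmn.2

lemma images_disjoint (a : Finset (Sym2 V)) (b : Finset (Sym2 V')) :
    Disjoint (a.image (Sym2.map (Sum.inl : V → V ⊕ V'))) (b.image (Sym2.map Sum.inr)) := by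
  rw [Finset.disjoint_left]
  intro q hq hq'
  obtain ⟨p, _, rfl⟩ := Finset.mem_image.mp hq
  obtain ⟨p', _, heq⟩ := Finset.mem_image.mp hq'
  exact mapInl_ne_mapInr p p' heq.symm

lemma valid_length {s t : Finset (Sym2 V)} {l : List (Sym2 V)} (h : Valid s t l) :
    l.length = (symmDiff s t).card := by
  rw [← h.2.1, List.toFinset_card_of_nodup h.1]

lemma split_length
    (hH1 : H1.adj = G1.adj.image (Sym2.map Sum.inl) ∪ G1'.adj.image (Sym2.map Sum.inr))
    (hH2 : H2.adj = G2.adj.image (Sym2.map Sum.inl) ∪ G2'.adj.image (Sym2.map Sum.inr))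
    {m : List (Sym2 (V ⊕ V'))} (hm : Valid H1.adj H2.adj m) :
    m.length = (symmDiff G1.adj G2.adj).card + (symmDiff G1'.adj G2'.adj).card := by
  rw [← List.toFinset_card_of_nodup hm.1, hm.2.1, DH hH1 hH2,
    Finset.card_union_of_disjoint (images_disjoint _ _),
    Finset.card_image_of_injective _ mapInl_injective,
    Finset.card_image_of_injective _ mapInr_injective]

lemma card_valid_H
    (hH1 : H1.adj = G1.adj.image (Sym2.map Sum.inl) ∪ G1'.adj.image (Sym2.map Sum.inr))
    (hH2 : H2.adj = G2.adj.image (Sym2.map Sum.inl) ∪ G2'.adj.image (Sym2.map Sum.inr)) :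
    Nat.card {m : List (Sym2 (V ⊕ V')) // Valid H1.adj H2.adj m} =
      Nat.card {x : List Bool × List (Sym2 V) × List (Sym2 V') //
        (x.1.length = (symmDiff G1.adj G2.adj).card + (symmDiff G1'.adj G2'.adj).card ∧
          x.1.count true = (symmDiff G1.adj G2.adj).card) ∧
        Valid G1.adj G2.adj x.2.1 ∧ Valid G1'.adj G2'.adj x.2.2} := by
  apply Nat.card_congr
  apply Equiv.symm
  refine Equiv.ofBijective (fun x => ⟨mergeL (Sym2.map Sum.inl) (Sym2.map Sum.inr) x.1.1 x.1.2.1 x.1.2.2,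
    valid_merge hH1 hH2 (by rw [x.2.1.2, valid_length x.2.2.1])
      (by rw [x.2.1.1, valid_length x.2.2.1, valid_length x.2.2.2]) x.2.2.1 x.2.2.2⟩) ⟨?_, ?_⟩
  · rintro ⟨⟨bs, l1, l2⟩, ⟨hlen, hcnt⟩, h1, h2⟩ ⟨⟨bs', l1', l2'⟩, ⟨hlen', hcnt'⟩, h1', h2'⟩ heq
    simp only [Subtype.mk.injEq] at heq ⊢
    have e1 : bs.count true = l1.length := by rw [hcnt, valid_length h1]
    have e2 : bs.length = l1.length + l2.length := by
      rw [hlen, valid_length h1, valid_length h2]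
    have e1' : bs'.count true = l1'.length := by rw [hcnt', valid_length h1']
    have e2' : bs'.length = l1'.length + l2'.length := by
      rw [hlen', valid_length h1', valid_length h2']
    have hb : bs = bs' := by
      rw [← map_isSome_mergeL (pl := projL) (fun a => projL_inl a) (fun b => projL_inr b) e1 e2,
        ← map_isSome_mergeL (pl := projL) (fun a => projL_inl a) (fun b => projL_inr b) e1' e2', heq]
    have hl1 : l1 = l1' := by
      rw [← filterMap_pl_mergeL (fun a => projL_inl a) (fun b => projL_inr b) e1 e2,
        ← filterMap_pl_mergeL (fun a => projL_inl a) (fun b => projL_inr b) e1' e2', heq]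
    have hl2 : l2 = l2' := by
      rw [← filterMap_pr_mergeL (fun b => projR_inr b) (fun a => projR_inl a) e1 e2,
        ← filterMap_pr_mergeL (fun b => projR_inr b) (fun a => projR_inl a) e1' e2', heq]
    simp [hb, hl1, hl2]
  · rintro ⟨m, hm⟩
    refine ⟨⟨(m.map fun q => (projL q).isSome, m.filterMap projL, m.filterMap projR),
      ⟨?_, ?_⟩, valid_split_left hH1 hH2 hm, valid_split_right hH1 hH2 hm⟩, ?_⟩
    · rw [List.length_map]
      exact split_length hH1 hH2 hm
    · rw [count_mask, valid_length (valid_split_left hH1 hH2 hm)]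
    · simp only [Subtype.mk.injEq]
      exact mergeL_split (fun a => projL_inl a) (fun b => projR_inr b) (fun b => projL_inr b)
        (fun a => projR_inl a) (split_shapes hH1 hH2 hm)

end Part4c


/-- Let `(G1, G2)` be genomes on `V` and `(G1', G2')` genomes on a
disjoint extremity set `V'` (modelled by the sum type `V ⊕ V'`).  If `H1`, `H2` are the
disjoint unions `G1 ⊔ G1'`, `G2 ⊔ G2'` on `V ⊕ V'`, then the number of most parsimonious
SCJ scenarios from `H1` to `H2` equals `binom (d + d') d · N · N'`, where `d`, `d'` are
the SCJ distances and `N`, `N'` the scenario counts of the two pairs. -/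
theorem disjointUnion_count {V V' : Type*} [DecidableEq V] [DecidableEq V']
    (G1 G2 : Genome V) (G1' G2' : Genome V') (H1 H2 : Genome (V ⊕ V'))
    (hH1 : H1.adj = G1.adj.image (Sym2.map Sum.inl) ∪ G1'.adj.image (Sym2.map Sum.inr))
    (hH2 : H2.adj = G2.adj.image (Sym2.map Sum.inl) ∪ G2'.adj.image (Sym2.map Sum.inr)) :
    NumMPS H1 H2 =
      Nat.choose (dSCJ G1 G2 + dSCJ G1' G2') (dSCJ G1 G2) * NumMPS G1 G2 * NumMPS G1' G2' := by
  rw [numMPS_eq_card_valid, numMPS_eq_card_valid, numMPS_eq_card_valid,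
    card_valid_H hH1 hH2, dSCJ_eq, dSCJ_eq,
    Nat.card_congr (prodSubtypeEquiv
      (fun bs : List Bool => bs.length =
          (symmDiff G1.adj G2.adj).card + (symmDiff G1'.adj G2'.adj).card ∧
        bs.count true = (symmDiff G1.adj G2.adj).card)
      (Valid G1.adj G2.adj) (Valid G1'.adj G2'.adj)), Nat.card_prod, Nat.card_prod,
    card_boolList, mul_assoc]
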